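/- arXiv:math-ph/0407011 — 4 statements merged into one kernel-verified Lean document; each statement's English description precedes it below -/
import Mathlib

section
/- Let n ≥ 3 and 2 ≤ j ≤ n−1. For all real numbers s and t one has the matrix identity exp(s·K₀ⱼ) · exp(t·K₀₁) · exp(−s·K₀ⱼ) = exp(t·(cosh(s)·K₀₁ − sinh(s)·K₁ⱼ)). (Matrix form of the anti–de Sitter group relation e^{isM₀ⱼ} e^{itM₀₁} e^{−isM₀ⱼ} = e^{it(cosh(s)M₀₁ − sinh(s)M₁ⱼ)}.) -/
open Matrix NormedSpace Real

/-- The matrix unit `E_{μν}`: the `(n+1)×(n+1)` real matrix with `1` in entry `(μ,ν)`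
and `0` elsewhere. -/
noncomputable def E (n : ℕ) (μ ν : Fin (n + 1)) : Matrix (Fin (n + 1)) (Fin (n + 1)) ℝ :=
  Matrix.single μ ν 1

/-- `K₀₁ = E₀₁ + E₁₀`, generator of the boost in the 0–1–plane. -/
noncomputable def K01 (n : ℕ) : Matrix (Fin (n + 1)) (Fin (n + 1)) ℝ := E n 0 1 + E n 1 0

/-- `K₀ₙ = E₀ₙ − Eₙ₀`, generator of the rotation in the 0–n–plane. -/
noncomputable def K0n (n : ℕ) : Matrix (Fin (n + 1)) (Fin (n + 1)) ℝ :=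
  E n 0 (Fin.last n) - E n (Fin.last n) 0

/-- `K₁ₙ = E₁ₙ + Eₙ₁`, generator of the boost in the 1–n–plane. -/
noncomputable def K1n (n : ℕ) : Matrix (Fin (n + 1)) (Fin (n + 1)) ℝ :=
  E n 1 (Fin.last n) + E n (Fin.last n) 1

/-- `K₀ⱼ = E₀ⱼ + Eⱼ₀`, generator of the boost in the 0–j–plane. -/
noncomputable def K0 (n : ℕ) (j : Fin (n + 1)) : Matrix (Fin (n + 1)) (Fin (n + 1)) ℝ :=
  E n 0 j + E n j 0

/-- `K₁ⱼ = E₁ⱼ − Eⱼ₁`, generator of the rotation in the 1–j–plane. -/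
noncomputable def K1 (n : ℕ) (j : Fin (n + 1)) : Matrix (Fin (n + 1)) (Fin (n + 1)) ℝ :=
  E n 1 j - E n j 1

/-- Powers: odd powers of `K` with `K² = P`, `PK = K` equal `K`. -/
lemma ads_pow_odd_eq {R : Type*} [Ring R] (K P : R) (h2 : K * K = P) (h3 : P * K = K) (k : ℕ) :
    K ^ (2 * k + 1) = K := by
  induction k with
  | zero => simp
  | succ k ih =>
    have h : 2 * (k + 1) + 1 = (2 * k + 1) + 2 := by ring
    rw [h, pow_add, ih, sq, ← mul_assoc, h2, h3]

/-- Powers: positive even powers equal `P`. -/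
lemma ads_pow_even_eq {R : Type*} [Ring R] (K P : R) (h2 : K * K = P) (h3 : P * K = K) (k : ℕ) :
    K ^ (2 * (k + 1)) = P := by
  have h : 2 * (k + 1) = (2 * k + 1) + 1 := by ring
  rw [h, pow_succ, ads_pow_odd_eq K P h2 h3, h2]

set_option maxHeartbeats 1000000 in
/-- Closed form of the exponential of a "boost generator": if `K² = P` and `PK = K` then
`exp(sK) = 1 + (cosh s − 1)P + sinh s K`. -/
lemma ads_exp_boost {m : ℕ} (K P : Matrix (Fin (m + 1)) (Fin (m + 1)) ℝ)
    (h2 : K * K = P) (h3 : P * K = K) (s : ℝ) :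
    exp (s • K) = 1 + (Real.cosh s - 1) • P + Real.sinh s • K := by
  rw [exp_eq_tsum (𝕂 := ℝ)]
  refine HasSum.tsum_eq ?_
  have hf : ∀ n : ℕ, ((n.factorial : ℝ))⁻¹ • (s • K) ^ n
      = (s ^ n / (n.factorial : ℝ)) • K ^ n := by
    intro n
    rw [smul_pow, smul_smul, div_eq_inv_mul]
  simp_rw [hf]
  have h1 : HasSum (fun k : ℕ => (s ^ (2 * (k + 1)) / ((2 * (k + 1)).factorial : ℝ))
      • K ^ (2 * (k + 1))) ((Real.cosh s - 1) • P) := by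
    have hc : HasSum (fun k : ℕ => s ^ (2 * (k + 1)) / ((2 * (k + 1)).factorial : ℝ))
        (Real.cosh s - 1) := by
      have h0 := (hasSum_nat_add_iff'
        (f := fun k : ℕ => s ^ (2 * k) / ((2 * k).factorial : ℝ)) 1).2 (Real.hasSum_cosh s)
      simpa using h0
    simp_rw [ads_pow_even_eq K P h2 h3]
    exact hc.smul_const P
  have heven : HasSum (fun k : ℕ => (s ^ (2 * k) / ((2 * k).factorial : ℝ)) • K ^ (2 * k))
      ((Real.cosh s - 1) • P + 1) := by
    have h2' := (hasSum_nat_add_iff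
      (f := fun k : ℕ => (s ^ (2 * k) / ((2 * k).factorial : ℝ)) • K ^ (2 * k)) 1).1 h1
    simpa using h2'
  have hodd : HasSum (fun k : ℕ => (s ^ (2 * k + 1) / ((2 * k + 1).factorial : ℝ))
      • K ^ (2 * k + 1)) (Real.sinh s • K) := by
    simp_rw [ads_pow_odd_eq K P h2 h3]
    exact (Real.hasSum_sinh s).smul_const K
  have htot := HasSum.even_add_odd
    (f := fun n : ℕ => (s ^ n / (n.factorial : ℝ)) • K ^ n) heven hodd
  have hre : (Real.cosh s - 1) • P + 1 + Real.sinh s • K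
      = 1 + (Real.cosh s - 1) • P + Real.sinh s • K := by abel
  rwa [hre] at htot

lemma E_mul_same (n : ℕ) (a b c : Fin (n + 1)) : E n a b * E n b c = E n a c := by
  simp [E]

lemma E_mul_ne (n : ℕ) {b c : Fin (n + 1)} (a d : Fin (n + 1)) (h : b ≠ c) :
    E n a b * E n c d = 0 :=
  Matrix.single_mul_single_of_ne 1 a b c h 1

lemma Emul (n : ℕ) (a b c d : Fin (n + 1)) :
    E n a b * E n c d = if b = c then E n a d else 0 := by
  rcases eq_or_ne b c with rfl | h
  · rw [if_pos rfl, E_mul_same]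
  · rw [if_neg h, E_mul_ne n a d h]

/-- The AdS group relation `e^{sK₀ⱼ} e^{tK₀₁} e^{−sK₀ⱼ} = e^{t(cosh(s)K₀₁ − sinh(s)K₁ⱼ)}`
for `2 ≤ j ≤ n − 1`. -/
theorem ads_relation_0j_01 (n : ℕ) (hn : 3 ≤ n) (j : Fin (n + 1))
    (hj2 : 2 ≤ (j : ℕ)) (hj : (j : ℕ) ≤ n - 1) (s t : ℝ) :
    exp (s • K0 n j) * exp (t • K01 n) * exp ((-s) • K0 n j) =
      exp (t • (Real.cosh s • K01 n - Real.sinh s • K1 n j)) := by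
  have hv1 : ((1 : Fin (n + 1)) : ℕ) = 1 := by
    have h : 1 < n + 1 := by omega
    simp [Fin.val_one', Nat.mod_eq_of_lt h]
  have h01 : (0 : Fin (n + 1)) ≠ 1 := by
    simp only [Ne, Fin.ext_iff, Fin.val_zero, hv1]
    omega
  have hj0 : j ≠ 0 := by
    intro h
    rw [h] at hj2
    simp at hj2
  have hj1 : j ≠ 1 := by
    intro h
    rw [h, hv1] at hj2
    omega
  have h10 : (1 : Fin (n + 1)) ≠ 0 := h01.symm
  have h0j : (0 : Fin (n + 1)) ≠ j := hj0.symm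
  have h1j : (1 : Fin (n + 1)) ≠ j := hj1.symm
  set P : Matrix (Fin (n + 1)) (Fin (n + 1)) ℝ := E n 0 0 + E n j j with hP
  -- basic algebraic facts
  have h2 : K0 n j * K0 n j = P := by
    simp only [K0, hP, add_mul, mul_add, Emul, if_neg h0j, if_neg hj0, if_pos rfl]
    simp only [if_true]
    abel
  have h3 : P * K0 n j = K0 n j := by
    simp only [K0, hP, add_mul, mul_add, Emul, if_neg h0j, if_neg hj0, if_pos rfl]
    simp only [if_true]
    abel
  -- the closed forms of the exponentials
  have hA := ads_exp_boost (K0 n j) P h2 h3 s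
  have hB := ads_exp_boost (K0 n j) P h2 h3 (-s)
  rw [Real.cosh_neg, Real.sinh_neg] at hB
  -- product facts
  have hPK01 : P * K01 n = E n 0 1 := by
    simp only [hP, K01, add_mul, mul_add, Emul, if_neg h01, if_neg h10, if_neg h0j,
      if_neg hj0, if_neg h1j, if_neg hj1, if_pos rfl]
    abel
  have hK01P : K01 n * P = E n 1 0 := by
    simp only [hP, K01, add_mul, mul_add, Emul, if_neg h01, if_neg h10, if_neg h0j,
      if_neg hj0, if_neg h1j, if_neg hj1, if_pos rfl]
    abel
  have hKK01 : K0 n j * K01 n = E n j 1 := by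
    simp only [K0, K01, add_mul, mul_add, Emul, if_neg h01, if_neg h10, if_neg h0j,
      if_neg hj0, if_neg h1j, if_neg hj1, if_pos rfl]
    abel
  have hK01K : K01 n * K0 n j = E n 1 j := by
    simp only [K0, K01, add_mul, mul_add, Emul, if_neg h01, if_neg h10, if_neg h0j,
      if_neg hj0, if_neg h1j, if_neg hj1, if_pos rfl]
    abel
  have hE01P : E n 0 1 * P = 0 := by
    simp only [hP, mul_add, Emul, if_neg h10, if_neg h1j, add_zero]
  have hE01K : E n 0 1 * K0 n j = 0 := by
    simp only [K0, mul_add, Emul, if_neg h10, if_neg h1j, add_zero]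
  have hEj1P : E n j 1 * P = 0 := by
    simp only [hP, mul_add, Emul, if_neg h10, if_neg h1j, add_zero]
  have hEj1K : E n j 1 * K0 n j = 0 := by
    simp only [K0, mul_add, Emul, if_neg h10, if_neg h1j, add_zero]
  -- key conjugation identity (finite-dimensional algebra)
  have key : (1 + (Real.cosh s - 1) • P + Real.sinh s • K0 n j) * K01 n *
      (1 + (Real.cosh s - 1) • P + -Real.sinh s • K0 n j) =
      Real.cosh s • K01 n - Real.sinh s • K1 n j := by
    simp only [add_mul, mul_add, mul_one, one_mul, smul_mul_assoc, mul_smul_comm, smul_smul,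
      hPK01, hK01P, hKK01, hK01K, hE01P, hE01K, hEj1P, hEj1K, smul_zero, add_zero]
    simp only [K01, K1]
    module
  -- assemble using exp_conj
  have hcomm : Commute (s • K0 n j) ((-s) • K0 n j) := by
    apply Commute.smul_left
    apply Commute.smul_right
    exact Commute.refl _
  have hABone : exp (s • K0 n j) * exp ((-s) • K0 n j) = 1 := by
    rw [← Matrix.exp_add_of_commute _ _ hcomm]
    have : s • K0 n j + (-s) • K0 n j = 0 := by
      rw [neg_smul]
      abel
    rw [this, NormedSpace.exp_zero]
  have hU : IsUnit (exp (s • K0 n j)) := Matrix.isUnit_exp _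
  have hinv : exp ((-s) • K0 n j) = (exp (s • K0 n j))⁻¹ := by
    rw [neg_smul, Matrix.exp_neg]
  have hconj : t • (Real.cosh s • K01 n - Real.sinh s • K1 n j)
      = exp (s • K0 n j) * (t • K01 n) * (exp (s • K0 n j))⁻¹ := by
    rw [← hinv, hA, hB]
    rw [mul_smul_comm, smul_mul_assoc, key]
  rw [hinv, hconj, Matrix.exp_conj _ _ hU]
end

section
/- Let n ≥ 3 and 2 ≤ j ≤ n−1. For all real numbers s and t one has the matrix identity exp(s·K₀₁) · exp(t·K₀ⱼ) · exp(−s·K₀₁) = exp(t·(cosh(s)·K₀ⱼ + sinh(s)·K₁ⱼ)). (Matrix form of the anti–de Sitter group relation e^{isM₀₁} e^{itM₀ⱼ} e^{−isM₀₁} = e^{it(cosh(s)M₀ⱼ + sinh(s)M₁ⱼ)}.) -/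
open Matrix NormedSpace Real

section auxiliary

open scoped Nat

attribute [local instance] Matrix.linftyOpNormedRing Matrix.linftyOpNormedAlgebra

private lemma tsum_exp_shift (x : ℝ) :
    ∑' k : ℕ, x ^ (k + 1) / ((k + 1) ! : ℝ) = Real.exp x - 1 := by
  have hs : Summable fun k : ℕ => x ^ k / (k ! : ℝ) := Real.summable_pow_div_factorial x
  have hexp : Real.exp x = ∑' k : ℕ, x ^ k / (k ! : ℝ) := by
    rw [Real.exp_eq_exp_ℝ, NormedSpace.exp_eq_tsum_div]
  rw [hexp, Summable.tsum_eq_zero_add hs]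
  simp

/-- The exponential of a scalar multiple of an idempotent matrix. -/
private lemma exp_smul_idem {m : Type*} [Fintype m] [DecidableEq m]
    (A : Matrix m m ℝ) (hA : A * A = A) (x : ℝ) :
    NormedSpace.exp (x • A) = 1 + (Real.exp x - 1) • A := by
  have hpow : ∀ k : ℕ, A ^ (k + 1) = A := by
    intro k
    induction k with
    | zero => simp
    | succ k ih => rw [pow_succ, ih, hA]
  have hsum : Summable fun k : ℕ => ((k ! : ℝ)⁻¹) • (x • A) ^ k :=
    expSeries_summable' (𝕂 := ℝ) (x • A)
  have hterm : ∀ k : ℕ, (((k + 1) ! : ℝ)⁻¹) • (x • A) ^ (k + 1)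
      = (x ^ (k + 1) / (k + 1) !) • A := by
    intro k
    rw [smul_pow, hpow, smul_smul]
    congr 1
    rw [div_eq_mul_inv, mul_comm]
  simp only [NormedSpace.exp_eq_tsum (𝕂 := ℝ)]
  rw [Summable.tsum_eq_zero_add hsum]
  simp only [hterm]
  have hsR : Summable fun k : ℕ => x ^ (k + 1) / ((k + 1) ! : ℝ) :=
    (summable_nat_add_iff 1).mpr (Real.summable_pow_div_factorial x)
  rw [Summable.tsum_smul_const hsR]
  rw [tsum_exp_shift]
  simp

/-- Closed form for the exponential of `s • K₀₁`. -/
private lemma exp_smul_K01 (n : ℕ) (h01 : (0 : Fin (n + 1)) ≠ 1) (s : ℝ) :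
    NormedSpace.exp (s • K01 n) =
      1 + Real.sinh s • K01 n + (Real.cosh s - 1) • (E n 0 0 + E n 1 1) := by
  have h10 : (1 : Fin (n + 1)) ≠ 0 := h01.symm
  set P : Matrix (Fin (n + 1)) (Fin (n + 1)) ℝ := E n 0 0 + E n 1 1 with hP
  have hPP : P * P = P := by
    simp [hP, E, mul_add, add_mul, h01, h10]
  have hPK : P * K01 n = K01 n := by
    simp [hP, K01, E, mul_add, add_mul, h01, h10]
    try abel
  have hKP : K01 n * P = K01 n := by
    simp [hP, K01, E, mul_add, add_mul, h01, h10]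
    try abel
  have hKK : K01 n * K01 n = P := by
    simp [hP, K01, E, mul_add, add_mul, h01, h10]
    try abel
  have hA : ((2⁻¹ : ℝ) • (P + K01 n)) * ((2⁻¹ : ℝ) • (P + K01 n))
      = (2⁻¹ : ℝ) • (P + K01 n) := by
    simp only [smul_mul_assoc, mul_smul_comm, mul_add, add_mul, hPP, hPK, hKP, hKK]
    module
  have hB : ((2⁻¹ : ℝ) • (P - K01 n)) * ((2⁻¹ : ℝ) • (P - K01 n))
      = (2⁻¹ : ℝ) • (P - K01 n) := by
    simp only [smul_mul_assoc, mul_smul_comm, mul_sub, sub_mul, hPP, hPK, hKP, hKK]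
    module
  have hAB : (P + K01 n) * (P - K01 n) = 0 := by
    simp only [mul_sub, sub_mul, mul_add, add_mul, hPP, hPK, hKP, hKK]
    module
  have hBA : (P - K01 n) * (P + K01 n) = 0 := by
    simp only [mul_sub, sub_mul, mul_add, add_mul, hPP, hPK, hKP, hKK]
    module
  have key : s • K01 n
      = s • ((2⁻¹ : ℝ) • (P + K01 n)) + (-s) • ((2⁻¹ : ℝ) • (P - K01 n)) := by
    module
  have hcomm : Commute (s • ((2⁻¹ : ℝ) • (P + K01 n)))
      ((-s) • ((2⁻¹ : ℝ) • (P - K01 n))) := by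
    unfold Commute SemiconjBy
    simp only [smul_mul_assoc, mul_smul_comm, hAB, hBA, smul_zero]
  rw [key, Matrix.exp_add_of_commute _ _ hcomm, exp_smul_idem _ hA, exp_smul_idem _ hB]
  have expand : (1 + (Real.exp s - 1) • ((2⁻¹ : ℝ) • (P + K01 n))) *
        (1 + (Real.exp (-s) - 1) • ((2⁻¹ : ℝ) • (P - K01 n)))
      = 1 + (Real.exp s - 1) • ((2⁻¹ : ℝ) • (P + K01 n))
          + (Real.exp (-s) - 1) • ((2⁻¹ : ℝ) • (P - K01 n)) := by
    rw [mul_add, mul_one, add_mul, one_mul]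
    simp only [smul_mul_assoc, mul_smul_comm, hAB, smul_zero, add_zero]
    try abel
  rw [expand, Real.sinh_eq, Real.cosh_eq]
  try module

end auxiliary

/-- The AdS group relation `e^{sK₀₁} e^{tK₀ⱼ} e^{−sK₀₁} = e^{t(cosh(s)K₀ⱼ + sinh(s)K₁ⱼ)}`
for `2 ≤ j ≤ n − 1`. -/
theorem ads_relation_01_0j (n : ℕ) (hn : 3 ≤ n) (j : Fin (n + 1))
    (hj2 : 2 ≤ (j : ℕ)) (hj : (j : ℕ) ≤ n - 1) (s t : ℝ) :
    NormedSpace.exp (s • K01 n) * NormedSpace.exp (t • K0 n j) * NormedSpace.exp ((-s) • K01 n) =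
      NormedSpace.exp (t • (Real.cosh s • K0 n j + Real.sinh s • K1 n j)) := by
  -- Basic `Fin` facts
  have h1v : ((1 : Fin (n + 1)) : ℕ) = 1 := by
    rw [Fin.val_one']
    exact Nat.mod_eq_of_lt (by omega)
  have h01 : (0 : Fin (n + 1)) ≠ 1 := by
    intro h
    have := congrArg Fin.val h
    rw [h1v] at this
    simp at this
  have h10 : (1 : Fin (n + 1)) ≠ 0 := h01.symm
  have hj0 : j ≠ 0 := by
    intro h
    rw [h] at hj2
    simp at hj2
  have h0j : (0 : Fin (n + 1)) ≠ j := hj0.symm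
  have hj1 : j ≠ 1 := by
    intro h
    rw [h, h1v] at hj2
    omega
  have h1j : (1 : Fin (n + 1)) ≠ j := hj1.symm
  -- the exponential of `s • K01` as a unit
  have hmul : ∀ u v : ℝ, NormedSpace.exp (u • K01 n) * NormedSpace.exp (v • K01 n) = NormedSpace.exp ((u + v) • K01 n) := by
    intro u v
    rw [add_smul, Matrix.exp_add_of_commute _ _ (((Commute.refl (K01 n)).smul_left u).smul_right v)]
  have hinv1 : NormedSpace.exp (s • K01 n) * NormedSpace.exp ((-s) • K01 n) = 1 := by
    rw [hmul, add_neg_cancel, zero_smul, NormedSpace.exp_zero]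
  have hinv2 : NormedSpace.exp ((-s) • K01 n) * NormedSpace.exp (s • K01 n) = 1 := by
    rw [hmul, neg_add_cancel, zero_smul, NormedSpace.exp_zero]
  set U : (Matrix (Fin (n + 1)) (Fin (n + 1)) ℝ)ˣ :=
    ⟨NormedSpace.exp (s • K01 n), NormedSpace.exp ((-s) • K01 n), hinv1, hinv2⟩ with hUdef
  have hUc : (U : Matrix (Fin (n + 1)) (Fin (n + 1)) ℝ) = NormedSpace.exp (s • K01 n) := rfl
  have hUic : ((U⁻¹ : _ˣ) : Matrix (Fin (n + 1)) (Fin (n + 1)) ℝ) = NormedSpace.exp ((-s) • K01 n) := rfl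
  rw [← hUc, ← hUic, ← Matrix.exp_units_conj U (t • K0 n j)]
  congr 1
  -- now a purely algebraic computation
  rw [hUc, hUic, exp_smul_K01 n h01 s, exp_smul_K01 n h01 (-s), Real.sinh_neg, Real.cosh_neg]
  simp only [K0, K1, K01, E, neg_smul, mul_neg, neg_mul, smul_neg, neg_neg, mul_add, add_mul, mul_sub, sub_mul, smul_mul_assoc,
    mul_smul_comm, one_mul, mul_one, smul_add, smul_sub, smul_smul, smul_zero, mul_zero,
    zero_mul, add_zero, zero_add, neg_zero, sub_zero, zero_sub,
    Matrix.single_mul_single_same, Matrix.single_mul_single_of_ne, h01, h10, hj0, h0j,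
    hj1, h1j, ne_eq, not_false_iff]
  module
end

section
/- Let n ≥ 3, 2 ≤ j ≤ n−1 and r ∈ ℝ. Then, in the space of (n+1)×(n+1) real matrices, as s → +∞ the product exp(s·K₀₁) · exp(2r·e^{−s}·K₀ⱼ) · exp(−s·K₀₁) converges to exp(r·(K₀ⱼ + K₁ⱼ)), and the product exp(−s·K₀₁) · exp(2r·e^{−s}·K₀ⱼ) · exp(s·K₀₁) converges to exp(r·(K₀ⱼ − K₁ⱼ)). (This is the contraction-limit relation lim_{s→±∞} e^{isM₀₁} e^{i2re^{−|s|}M₀ⱼ} e^{−isM₀₁} = e^{ir(M₀ⱼ ± M₁ⱼ)} at the matrix level, producing the lightlike generators from boosts.) -/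
open Matrix NormedSpace Real

open Filter Topology

/- ### Auxiliary lemmas -/

lemma comm_K0 {n : ℕ} {j : Fin (n+1)} (h10 : (1 : Fin (n+1)) ≠ 0)
    (hj0 : j ≠ 0) (hj1 : j ≠ 1) :
    K01 n * K0 n j - K0 n j * K01 n = K1 n j := by
  have h01 : (0 : Fin (n+1)) ≠ 1 := h10.symm
  have hj0' := hj0.symm
  have hj1' := hj1.symm
  simp only [K01, K0, K1, E, add_mul, mul_add]
  simp [h10, h01, hj0, hj1, hj0', hj1']

lemma comm_K1 {n : ℕ} {j : Fin (n+1)} (h10 : (1 : Fin (n+1)) ≠ 0)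
    (hj0 : j ≠ 0) (hj1 : j ≠ 1) :
    K01 n * K1 n j - K1 n j * K01 n = K0 n j := by
  have h01 : (0 : Fin (n+1)) ≠ 1 := h10.symm
  have hj0' := hj0.symm
  have hj1' := hj1.symm
  simp only [K01, K0, K1, E, add_mul, mul_add, mul_sub, sub_mul]
  simp [h10, h01, hj0, hj1, hj0', hj1']

lemma exp_mul_exp_neg {n : ℕ} (s : ℝ) :
    exp (s • K01 n) * exp ((-s) • K01 n) = 1 := by
  rw [← Matrix.exp_add_of_commute _ _
    (((Commute.refl (K01 n)).smul_left s).smul_right (-s))]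
  rw [show s • K01 n + (-s) • K01 n = (0 : Matrix (Fin (n+1)) (Fin (n+1)) ℝ) by
    rw [neg_smul]; abel]
  exact NormedSpace.exp_zero

lemma conj_K0 {n : ℕ} {j : Fin (n+1)} (h10 : (1 : Fin (n+1)) ≠ 0)
    (hj0 : j ≠ 0) (hj1 : j ≠ 1) (s : ℝ) :
    exp (s • K01 n) * K0 n j * exp ((-s) • K01 n)
      = Real.cosh s • K0 n j + Real.sinh s • K1 n j := by
  letI : SeminormedRing (Matrix (Fin (n+1)) (Fin (n+1)) ℝ) := Matrix.linftyOpSemiNormedRing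
  letI : NormedRing (Matrix (Fin (n+1)) (Fin (n+1)) ℝ) := Matrix.linftyOpNormedRing
  letI : NormedAlgebra ℝ (Matrix (Fin (n+1)) (Fin (n+1)) ℝ) := Matrix.linftyOpNormedAlgebra
  set M := fun t : ℝ => Real.cosh t • K0 n j + Real.sinh t • K1 n j with hM
  set g := fun t : ℝ => exp ((-t) • K01 n) * M t * exp (t • K01 n) with hg
  have hA : ∀ t : ℝ, HasDerivAt (fun u : ℝ => exp ((-u) • K01 n))
      (-(exp ((-t) • K01 n) * K01 n)) t := by
    intro t
    have h1 := hasDerivAt_exp_smul_const (𝕂 := ℝ) (K01 n) (-t)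
    have h2 : HasDerivAt (fun u : ℝ => -u) (-1) t := (hasDerivAt_id t).neg
    have := h1.scomp t h2
    simp only [Function.comp_def, neg_smul] at this
    simp only [neg_smul, one_smul] at this ⊢
    exact this
  have hC : ∀ t : ℝ, HasDerivAt (fun u : ℝ => exp (u • K01 n))
      (K01 n * exp (t • K01 n)) t := fun t =>
    hasDerivAt_exp_smul_const' (𝕂 := ℝ) (K01 n) t
  have hB : ∀ t : ℝ, HasDerivAt M (Real.sinh t • K0 n j + Real.cosh t • K1 n j) t := by
    intro t
    exact ((Real.hasDerivAt_cosh t).smul_const (K0 n j)).add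
      ((Real.hasDerivAt_sinh t).smul_const (K1 n j))
  have hg' : ∀ t : ℝ, HasDerivAt g 0 t := by
    intro t
    have h := (((hA t).mul (hB t)).mul (hC t))
    convert h using 1
    · rfl
    · rfl
    · rfl
    · rfl
    have hcomm0 := comm_K0 h10 hj0 hj1
    have hcomm1 := comm_K1 h10 hj0 hj1
    have key : K01 n * M t - M t * K01 n = Real.sinh t • K0 n j + Real.cosh t • K1 n j := by
      rw [hM]
      simp only [mul_add, add_mul, mul_smul_comm, smul_mul_assoc]
      rw [show ∀ a b c d : Matrix (Fin (n+1)) (Fin (n+1)) ℝ,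
        a + b - (c + d) = (a - c) + (b - d) by intros; abel]
      rw [← smul_sub, ← smul_sub, hcomm0, hcomm1]
      abel
    have expand : (-(exp ((-t) • K01 n) * K01 n) * M t
        + exp ((-t) • K01 n) * (Real.sinh t • K0 n j + Real.cosh t • K1 n j))
          * exp (t • K01 n)
        + exp ((-t) • K01 n) * M t * (K01 n * exp (t • K01 n)) = 0 := by
      have : Real.sinh t • K0 n j + Real.cosh t • K1 n j
          = K01 n * M t - M t * K01 n := key.symm
      rw [this]
      noncomm_ring
    exact expand.symm
  have hconst : g s = g 0 := by
    have hdiff : Differentiable ℝ g := fun t => (hg' t).differentiableAt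
    have hderiv : ∀ t, deriv g t = 0 := fun t => (hg' t).deriv
    exact is_const_of_deriv_eq_zero hdiff hderiv s 0
  have hg0 : g 0 = K0 n j := by
    simp [hg, hM, NormedSpace.exp_zero]
  rw [hg0] at hconst
  calc exp (s • K01 n) * K0 n j * exp ((-s) • K01 n)
      = exp (s • K01 n) * g s * exp ((-s) • K01 n) := by rw [hconst]
    _ = (exp (s • K01 n) * exp ((-s) • K01 n)) * M s
          * (exp (s • K01 n) * exp ((-s) • K01 n)) := by
        simp only [hg]; noncomm_ring
    _ = M s := by rw [exp_mul_exp_neg]; simp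

lemma prod_eq {n : ℕ} {j : Fin (n+1)} (h10 : (1 : Fin (n+1)) ≠ 0)
    (hj0 : j ≠ 0) (hj1 : j ≠ 1) (a s : ℝ) :
    exp (s • K01 n) * exp (a • K0 n j) * exp ((-s) • K01 n)
      = exp ((a * Real.cosh s) • K0 n j + (a * Real.sinh s) • K1 n j) := by
  set U : (Matrix (Fin (n+1)) (Fin (n+1)) ℝ)ˣ :=
    ⟨exp (s • K01 n), exp ((-s) • K01 n), exp_mul_exp_neg s, by
      have := exp_mul_exp_neg (n := n) (-s); rwa [neg_neg] at this⟩ with hU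
  have hconj := Matrix.exp_units_conj U (a • K0 n j)
  have hval : (U : Matrix (Fin (n+1)) (Fin (n+1)) ℝ) = exp (s • K01 n) := rfl
  have hinv : ((U⁻¹ : _ˣ) : Matrix (Fin (n+1)) (Fin (n+1)) ℝ) = exp ((-s) • K01 n) := rfl
  rw [hval, hinv] at hconj
  rw [← hconj]
  congr 1
  rw [show exp (s • K01 n) * (a • K0 n j) * exp ((-s) • K01 n)
      = a • (exp (s • K01 n) * K0 n j * exp ((-s) • K01 n)) by
    simp [Matrix.mul_smul, Matrix.smul_mul]]
  rw [conj_K0 h10 hj0 hj1, smul_add, smul_smul, smul_smul]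

lemma exp_cont {N : ℕ} :
    Continuous (exp : Matrix (Fin N) (Fin N) ℝ → Matrix (Fin N) (Fin N) ℝ) := by
  letI : SeminormedRing (Matrix (Fin N) (Fin N) ℝ) := Matrix.linftyOpSemiNormedRing
  letI : NormedRing (Matrix (Fin N) (Fin N) ℝ) := Matrix.linftyOpNormedRing
  letI : NormedAlgebra ℝ (Matrix (Fin N) (Fin N) ℝ) := Matrix.linftyOpNormedAlgebra
  exact continuous_iff_continuousAt.2 fun x => (exp_analytic (𝕂 := ℝ) x).continuousAt

lemma tendsto_exp_comb {N : ℕ} (X Y : Matrix (Fin N) (Fin N) ℝ) {c1 c2 : ℝ → ℝ} {a b : ℝ}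
    (h1 : Tendsto c1 atTop (𝓝 a)) (h2 : Tendsto c2 atTop (𝓝 b)) :
    Tendsto (fun s => exp (c1 s • X + c2 s • Y)) atTop (𝓝 (exp (a • X + b • Y))) :=
  (exp_cont.tendsto _).comp ((h1.smul_const X).add (h2.smul_const Y))

lemma tendsto_cosh_coeff (r : ℝ) :
    Tendsto (fun s : ℝ => 2 * r * Real.exp (-s) * Real.cosh s) atTop (𝓝 r) := by
  have he : Tendsto (fun s : ℝ => Real.exp (-s)) atTop (𝓝 0) :=
    Real.tendsto_exp_atBot.comp tendsto_neg_atTop_atBot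
  have key : ∀ s : ℝ, 2 * r * Real.exp (-s) * Real.cosh s
      = r + r * (Real.exp (-s) * Real.exp (-s)) := by
    intro s
    rw [Real.cosh_eq, Real.exp_neg]
    have h := Real.exp_ne_zero s
    field_simp
  simp only [key]
  have : Tendsto (fun s : ℝ => r + r * (Real.exp (-s) * Real.exp (-s))) atTop
      (𝓝 (r + r * (0 * 0))) :=
    tendsto_const_nhds.add (tendsto_const_nhds.mul (he.mul he))
  simpa using this

lemma tendsto_sinh_coeff (r : ℝ) :
    Tendsto (fun s : ℝ => 2 * r * Real.exp (-s) * Real.sinh s) atTop (𝓝 r) := by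
  have he : Tendsto (fun s : ℝ => Real.exp (-s)) atTop (𝓝 0) :=
    Real.tendsto_exp_atBot.comp tendsto_neg_atTop_atBot
  have key : ∀ s : ℝ, 2 * r * Real.exp (-s) * Real.sinh s
      = r - r * (Real.exp (-s) * Real.exp (-s)) := by
    intro s
    rw [Real.sinh_eq, Real.exp_neg]
    have h := Real.exp_ne_zero s
    field_simp
  simp only [key]
  have : Tendsto (fun s : ℝ => r - r * (Real.exp (-s) * Real.exp (-s))) atTop
      (𝓝 (r - r * (0 * 0))) :=
    tendsto_const_nhds.sub (tendsto_const_nhds.mul (he.mul he))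
  simpa using this

/-- The contraction limits
`lim_{s→∞} e^{sK₀₁} e^{2re^{−s}K₀ⱼ} e^{−sK₀₁} = e^{r(K₀ⱼ + K₁ⱼ)}` and
`lim_{s→∞} e^{−sK₀₁} e^{2re^{−s}K₀ⱼ} e^{sK₀₁} = e^{r(K₀ⱼ − K₁ⱼ)}`
for `2 ≤ j ≤ n − 1`, producing the lightlike generators from boosts. -/
theorem ads_contraction_limit (n : ℕ) (hn : 3 ≤ n) (j : Fin (n + 1))
    (hj2 : 2 ≤ (j : ℕ)) (hj : (j : ℕ) ≤ n - 1) (r : ℝ) :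
    Tendsto (fun s : ℝ =>
        exp (s • K01 n) * exp ((2 * r * Real.exp (-s)) • K0 n j) * exp ((-s) • K01 n))
      atTop (𝓝 (exp (r • (K0 n j + K1 n j)))) ∧
    Tendsto (fun s : ℝ =>
        exp ((-s) • K01 n) * exp ((2 * r * Real.exp (-s)) • K0 n j) * exp (s • K01 n))
      atTop (𝓝 (exp (r • (K0 n j - K1 n j)))) := by
  have hv1 : ((1 : Fin (n+1)) : ℕ) = 1 := by rw [Fin.val_one']; exact Nat.mod_eq_of_lt (by omega)
  have h10 : (1 : Fin (n+1)) ≠ 0 :=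
    Fin.ne_of_val_ne (by rw [hv1, Fin.val_zero]; omega)
  have hj0 : j ≠ 0 := Fin.ne_of_val_ne (by rw [Fin.val_zero]; omega)
  have hj1 : j ≠ 1 := Fin.ne_of_val_ne (by rw [hv1]; omega)
  constructor
  · have hpt : ∀ s : ℝ,
        exp (s • K01 n) * exp ((2 * r * Real.exp (-s)) • K0 n j) * exp ((-s) • K01 n)
          = exp ((2 * r * Real.exp (-s) * Real.cosh s) • K0 n j
              + (2 * r * Real.exp (-s) * Real.sinh s) • K1 n j) := fun s =>
      prod_eq h10 hj0 hj1 _ s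
    have hlim := tendsto_exp_comb (K0 n j) (K1 n j)
      (tendsto_cosh_coeff r) (tendsto_sinh_coeff r)
    rw [show r • (K0 n j + K1 n j) = r • K0 n j + r • K1 n j by rw [smul_add]]
    exact hlim.congr fun s => (hpt s).symm
  · have hpt : ∀ s : ℝ,
        exp ((-s) • K01 n) * exp ((2 * r * Real.exp (-s)) • K0 n j) * exp (s • K01 n)
          = exp ((2 * r * Real.exp (-s) * Real.cosh s) • K0 n j
              + (-(2 * r * Real.exp (-s) * Real.sinh s)) • K1 n j) := by
      intro s
      have := prod_eq h10 hj0 hj1 (2 * r * Real.exp (-s)) (-s)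
      rw [neg_neg, Real.cosh_neg, Real.sinh_neg] at this
      rw [this]
      ring_nf
    have hlim := tendsto_exp_comb (K0 n j) (K1 n j)
      (tendsto_cosh_coeff r) (tendsto_sinh_coeff r).neg
    rw [show r • (K0 n j - K1 n j) = r • K0 n j + (-r) • K1 n j by
      rw [smul_sub, neg_smul, sub_eq_add_neg]]
    exact hlim.congr fun s => (hpt s).symm
end

section
/- Partition-function bound under cubic multiplicity growth: let (μ_m)_{m≥1} be real numbers with 0 ≤ μ_m ≤ 2m³ for all m ≥ 1. Then for every γ > 0 the series ∑_{m=1}^∞ μ_m · (−log(1 − e^{−γm})) converges, and ∑_{m=1}^∞ μ_m · (−log(1 − e^{−γm})) ≤ 12·e^{−γ}/(1 − e^{−γ})⁵ ≤ 12·5⁵/γ⁵. (Equivalently, log tr e^{−γH} ≤ 12·5⁵/γ⁵ for the second-quantized bosonic Hamiltonian H built from a one-particle Hamiltonian with eigenvalues m ∈ ℕ of multiplicity μ_m ≤ 2m³.) -/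
lemma choose3_nat (m : ℕ) : 6 * (m + 3).choose 3 = (m + 1) * (m + 2) * (m + 3) := by
  have h := Nat.descFactorial_eq_factorial_mul_choose (m + 3) 3
  have h2 : (m + 3).descFactorial 3 = (m + 1) * ((m + 2) * (m + 3)) := by
    simp [Nat.descFactorial_succ, Nat.descFactorial_zero]
  rw [h2] at h
  simp [Nat.factorial] at h
  rw [← h]; ring

lemma choose3_eq (m : ℕ) : (6 : ℝ) * ((m + 3).choose 3 : ℝ) =
    ((m : ℝ) + 1) * ((m : ℝ) + 2) * ((m : ℝ) + 3) := by
  have := choose3_nat m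
  have h := congrArg (Nat.cast (R := ℝ)) this
  push_cast at h
  linarith

/-- Partition-function bound under cubic multiplicity growth: if `0 ≤ μ_m ≤ 2m³` for all
`m ≥ 1`, then for every `γ > 0` the series `∑_{m≥1} μ_m·(−log(1 − e^{−γm}))` converges
and is bounded by `12·e^{−γ}/(1 − e^{−γ})⁵ ≤ 12·5⁵/γ⁵`. -/
theorem partition_function_bound (μ : ℕ → ℝ)
    (hμ : ∀ m : ℕ, 1 ≤ m → 0 ≤ μ m ∧ μ m ≤ 2 * (m : ℝ) ^ 3) :
    ∀ γ > (0 : ℝ),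
      Summable (fun m : ℕ =>
        μ (m + 1) * (-Real.log (1 - Real.exp (-(γ * (m + 1)))))) ∧
      (∑' m : ℕ, μ (m + 1) * (-Real.log (1 - Real.exp (-(γ * (m + 1)))))) ≤
        12 * Real.exp (-γ) / (1 - Real.exp (-γ)) ^ 5 ∧
      12 * Real.exp (-γ) / (1 - Real.exp (-γ)) ^ 5 ≤ 12 * 5 ^ 5 / γ ^ 5 := by
  intro γ hγ
  set q : ℝ := Real.exp (-γ) with hq
  have hq0 : 0 < q := Real.exp_pos _
  have hq1 : q < 1 := by
    rw [hq]
    exact Real.exp_lt_one_iff.mpr (by linarith)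
  have h1q : 0 < 1 - q := by linarith
  -- rewrite the exponential as a power of q
  have hexp : ∀ m : ℕ, Real.exp (-(γ * (m + 1))) = q ^ (m + 1) := by
    intro m
    rw [hq, ← Real.exp_nat_mul]
    congr 1
    push_cast
    ring
  -- pointwise bounds
  have hL : ∀ m : ℕ, 0 ≤ -Real.log (1 - q ^ (m + 1)) ∧
      -Real.log (1 - q ^ (m + 1)) ≤ q ^ (m + 1) / (1 - q) := by
    intro m
    have hx0 : 0 < q ^ (m + 1) := pow_pos hq0 _
    have hxq : q ^ (m + 1) ≤ q := by
      calc q ^ (m + 1) ≤ q ^ 1 := pow_le_pow_of_le_one hq0.le hq1.le (by omega)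
        _ = q := pow_one q
    have h1x : 0 < 1 - q ^ (m + 1) := by linarith
    constructor
    · have : Real.log (1 - q ^ (m + 1)) ≤ 0 :=
        Real.log_nonpos (by linarith) (by linarith)
      linarith
    · have h1 : -Real.log (1 - q ^ (m + 1)) = Real.log (1 - q ^ (m + 1))⁻¹ := by
        rw [Real.log_inv]
      rw [h1]
      have h2 : Real.log (1 - q ^ (m + 1))⁻¹ ≤ (1 - q ^ (m + 1))⁻¹ - 1 :=
        Real.log_le_sub_one_of_pos (by positivity)
      have h3 : (1 - q ^ (m + 1))⁻¹ - 1 = q ^ (m + 1) / (1 - q ^ (m + 1)) := by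
        field_simp
        ring
      have h4 : q ^ (m + 1) / (1 - q ^ (m + 1)) ≤ q ^ (m + 1) / (1 - q) :=
        div_le_div_of_nonneg_left hx0.le h1q (by linarith)
      linarith
  -- the dominating function
  set h : ℕ → ℝ := fun m => (12 * q / (1 - q)) * (((m + 3).choose 3 : ℝ) * q ^ m) with hh
  have hsum_h : Summable h := by
    apply Summable.mul_left
    exact summable_choose_mul_geometric_of_norm_lt_one (R := ℝ) 3 (r := q)
      (by rwa [Real.norm_eq_abs, abs_of_pos hq0])
  have hbound : ∀ m : ℕ,
      μ (m + 1) * (-Real.log (1 - Real.exp (-(γ * (m + 1))))) ≤ h m ∧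
      0 ≤ μ (m + 1) * (-Real.log (1 - Real.exp (-(γ * (m + 1))))) := by
    intro m
    obtain ⟨hμ0, hμle⟩ := hμ (m + 1) (by omega)
    obtain ⟨hL0, hLle⟩ := hL m
    rw [hexp m]
    refine ⟨?_, mul_nonneg hμ0 hL0⟩
    have step1 : μ (m + 1) * (-Real.log (1 - q ^ (m + 1))) ≤
        (2 * ((m : ℝ) + 1) ^ 3) * (q ^ (m + 1) / (1 - q)) := by
      have hc : ((m + 1 : ℕ) : ℝ) = (m : ℝ) + 1 := by push_cast; ring
      apply mul_le_mul (by rw [← hc]; exact_mod_cast hμle) hLle hL0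
      positivity
    refine step1.trans ?_
    rw [hh]
    have hcube : 2 * ((m : ℝ) + 1) ^ 3 ≤ 12 * ((m + 3).choose 3 : ℝ) := by
      have := choose3_eq m
      nlinarith [sq_nonneg ((m : ℝ)), (Nat.cast_nonneg m : (0:ℝ) ≤ m)]
    have hxpos : 0 < q ^ (m + 1) / (1 - q) := by positivity
    calc (2 * ((m : ℝ) + 1) ^ 3) * (q ^ (m + 1) / (1 - q))
        ≤ (12 * ((m + 3).choose 3 : ℝ)) * (q ^ (m + 1) / (1 - q)) := by
          apply mul_le_mul_of_nonneg_right hcube hxpos.le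
      _ = (12 * q / (1 - q)) * (((m + 3).choose 3 : ℝ) * q ^ m) := by
          rw [pow_succ]; field_simp
  have hsummable : Summable (fun m : ℕ =>
      μ (m + 1) * (-Real.log (1 - Real.exp (-(γ * (m + 1)))))) :=
    Summable.of_nonneg_of_le (fun m => (hbound m).2) (fun m => (hbound m).1) hsum_h
  refine ⟨hsummable, ?_, ?_⟩
  · have htsum_h : ∑' m, h m = 12 * q / (1 - q) ^ 5 := by
      rw [hh, tsum_mul_left]
      have := tsum_choose_mul_geometric_of_norm_lt_one (𝕜 := ℝ) 3
        (r := q) (by rwa [Real.norm_eq_abs, abs_of_pos hq0])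
      rw [this]
      field_simp
    calc (∑' m : ℕ, μ (m + 1) * (-Real.log (1 - Real.exp (-(γ * (m + 1))))))
        ≤ ∑' m, h m := Summable.tsum_le_tsum (fun m => (hbound m).1) hsummable hsum_h
      _ = 12 * q / (1 - q) ^ 5 := htsum_h
      _ = 12 * Real.exp (-γ) / (1 - Real.exp (-γ)) ^ 5 := by rw [hq]
  · -- second inequality
    have key : γ / 5 * Real.exp (-(γ / 5)) ≤ 1 - q := by
      have h5 : Real.exp (-(γ/5)) * (γ/5) ≤ 1 - Real.exp (-(γ/5)) := by
        have := Real.add_one_le_exp (γ/5)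
        have hmul : Real.exp (-(γ/5)) * Real.exp (γ/5) = 1 := by
          rw [← Real.exp_add]; simp
        nlinarith [Real.exp_pos (-(γ/5))]
      have h6 : Real.exp (-γ) ≤ Real.exp (-(γ/5)) :=
        Real.exp_le_exp.mpr (by linarith)
      rw [hq]; nlinarith
    have hpow : γ ^ 5 / 5 ^ 5 * q ≤ (1 - q) ^ 5 := by
      have h0 : 0 ≤ γ / 5 * Real.exp (-(γ / 5)) := by positivity
      have := pow_le_pow_left₀ h0 key 5
      have hexp5 : (Real.exp (-(γ/5))) ^ 5 = q := by
        rw [hq, ← Real.exp_nat_mul]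
        congr 1
        push_cast
        ring
      calc γ ^ 5 / 5 ^ 5 * q = (γ / 5 * Real.exp (-(γ / 5))) ^ 5 := by
            rw [mul_pow, hexp5]; ring
        _ ≤ (1 - q) ^ 5 := this
    rw [div_le_div_iff₀ (by positivity) (by positivity)]
    nlinarith [Real.exp_pos (-γ), pow_pos h1q 5, pow_pos hγ 5]
end
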